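/- Every positive-ended path of a net of designs R belongs to the shuffle closure of R: if p is a positive-ended path all of whose views ⌜q⌝ (for prefixes q of p) are chronicles of R, then p lies in the shuffle closure R⧢ of the chronicles of R. -/

import Mathlib

namespace Ludics

abbrev Address := List ℕ

/-- An action of Ludics: the daimon, or a proper action given by a polarity
(`true` = positive), a focus address and a ramification. -/
inductive Action where
  | daimon : Action
  | proper (pos : Bool) (focus : Address) (ram : Finset ℕ) : Action
deriving DecidableEq

namespace Action

def isPositive : Action → Bool
  | daimon => true
  | proper pos _ _ => pos

def focus? : Action → Option Address
  | daimon => none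
  | proper _ ξ _ => some ξ

/-- Reverse the polarity of an action. -/
def dual : Action → Action
  | daimon => daimon
  | proper pos ξ I => proper (!pos) ξ I

/-- `a.justifiesB b` : the focus of `b` is one of the addresses created by `a`. -/
def justifiesB : Action → Action → Bool
  | proper _ ξ I, proper _ ζ _ => decide (∃ i ∈ I, ζ = ξ ++ [i])
  | _, _ => false

def justifies (a b : Action) : Prop := a.justifiesB b = true

end Action

/-- A sequent of a base: an optional left address (at most one) and a finite
set of right addresses. -/
structure Sequent where
  left : Option Address
  right : Finset Address

abbrev Base := List Sequent

def Base.isPositive (β : Base) : Prop := ∃ σ ∈ β, σ.left = none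

/-- An action is initial w.r.t. a base if its focus belongs to the base
(on the side corresponding to its polarity). -/
def Initial (β : Base) (a : Action) : Prop :=
  ∃ pol ξ I, a = .proper pol ξ I ∧
    ∃ σ ∈ β, (pol = true ∧ ξ ∈ σ.right) ∨ (pol = false ∧ σ.left = some ξ)

/-- A sequent "owns" an action when its focus is hereditarily justified by an
address of the sequent (i.e. extends an address of the sequent). -/
def Sequent.owns (σ : Sequent) (a : Action) : Prop :=
  ∃ ξ, a.focus? = some ξ ∧
    ((∃ γ, σ.left = some γ ∧ γ <+: ξ) ∨ (∃ δ ∈ σ.right, δ <+: ξ))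

def Sequent.addresses (σ : Sequent) : Set Address :=
  (match σ.left with | some γ => {γ} | none => ∅) ∪ ↑σ.right

def Base.addresses (β : Base) : Set Address :=
  {a | ∃ σ ∈ β, a ∈ σ.addresses}

/-- The dual base: each sequent `Γ ⊢ Δ` gives sequents `⊢ Γ` and `δ ⊢` for δ ∈ Δ. -/
noncomputable def Sequent.dualSequents (σ : Sequent) : List Sequent :=
  (match σ.left with
    | some γ => [⟨none, ({γ} : Finset Address)⟩]
    | none => []) ++
    σ.right.toList.map fun δ => ⟨some δ, (∅ : Finset Address)⟩

noncomputable def Base.dual (β : Base) : Base := (β.map Sequent.dualSequents).flatten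

/-- View of a sequence, computed on the reversed sequence (most recent action
first), with fuel. -/
def viewRevAux : ℕ → List Action → List Action
  | 0, _ => []
  | _ + 1, [] => []
  | n + 1, a :: w =>
    if a.isPositive then a :: viewRevAux n w
    else a :: viewRevAux n (w.dropWhile fun b => !(b.justifiesB a))

def viewRev (s : List Action) : List Action := viewRevAux s.length s

/-- The view `⌜s⌝` of a sequence of actions. -/
def view (s : List Action) : List Action := (viewRev s.reverse).reverse

/-- `p` is a path based on `β`. -/
structure IsPath (β : Base) (p : List Action) : Prop where
  alternating : p.Chain' fun a b => a.isPositive ≠ b.isPositive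
  justified : ∀ w a, w ++ [a] <+: p → a ≠ Action.daimon →
    Initial β a ∨ ∃ b ∈ w, b.justifies a
  negJump : ∀ w a b, w ++ [a] <+: p → a.isPositive = true → b ∈ w →
    b.justifies a → b ∈ view w
  posJump : ∀ w a, w ++ [a] <+: p → a.isPositive = true → a ≠ Action.daimon →
    ∀ σ ∈ β, (∃ f, a.focus? = some f ∧ f ∈ σ.right) →
      (w = [] ∧ σ.left = none) ∨
      ∃ w' b, w = w' ++ [b] ∧ b.isPositive = false ∧ σ.owns b
  linearity : (p.filterMap Action.focus?).Nodup
  daimonLast : ∀ w, w ++ [Action.daimon] <+: p → w ++ [Action.daimon] = p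
  daimonFirst : p.head? = some Action.daimon → β.isPositive
  totality : β.isPositive → ∃ a t, p = a :: t ∧
    (a = Action.daimon ∨ (a.isPositive = true ∧ Initial β a))

/-- A chronicle: a non-empty path where each non-initial negative action is
justified by the immediately preceding action. -/
def IsChronicle (β : Base) (c : List Action) : Prop :=
  IsPath β c ∧ c ≠ [] ∧
    ∀ w a b, w ++ [a, b] <+: c → b.isPositive = false →
      Initial β b ∨ a.justifies b

/-- The dual of a positive-ended sequence: reverse all polarities, removing a
final daimon if present and appending one otherwise. -/
def dualSeq (p : List Action) : List Action :=
  if p.getLast? = some Action.daimon then p.dropLast.map Action.dual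
  else p.map Action.dual ++ [Action.daimon]

/-- Positive-ended (possibly empty) sequence. -/
def PosEnded (p : List Action) : Prop :=
  p = [] ∨ ∃ a, p.getLast? = some a ∧ a.isPositive = true

/-- A (non-empty) negative-starting, positive-ended block. -/
def NegBlock (b : List Action) : Prop :=
  b ≠ [] ∧ (∀ a, b.head? = some a → a.isPositive = false) ∧
    ∀ a, b.getLast? = some a → a.isPositive = true

def EndsWithDaimon (p : List Action) : Prop := p.getLast? = some Action.daimon

/-- Basic shuffle of two positive-ended negative paths: interleaving by
positive-ended negative blocks; if the last `p`-block ends with the daimon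
then the last `q`-block is empty. -/
def ShuffleNeg (p q r : List Action) : Prop :=
  ∃ ps qs : List (List Action),
    ps.length = qs.length ∧
    (∀ b ∈ ps, b = [] ∨ NegBlock b) ∧
    (∀ b ∈ qs, b = [] ∨ NegBlock b) ∧
    ps.flatten = p ∧ qs.flatten = q ∧
    (List.zipWith (· ++ ·) ps qs).flatten = r ∧
    (EndsWithDaimon (ps.getLast?.getD []) → qs.getLast?.getD [] = [])

/-- The shuffle `r ∈ p ⧢ q`, including the extensions to two daimon-ended
paths and to paths with a common positive-ended prefix. -/
inductive Shuffle : List Action → List Action → List Action → Prop where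
  | base {p q r} : ShuffleNeg p q r → Shuffle p q r
  | daiLeft {p q r} {κ₁ κ₂ : Action} :
      Shuffle (p ++ [κ₁, Action.daimon]) q r →
      Shuffle (p ++ [κ₁, Action.daimon]) (q ++ [κ₂, Action.daimon]) r
  | daiRight {p q r} {κ₁ κ₂ : Action} :
      Shuffle p (q ++ [κ₂, Action.daimon]) r →
      Shuffle (p ++ [κ₁, Action.daimon]) (q ++ [κ₂, Action.daimon]) r
  | pre {s p q r} : s ≠ [] → PosEnded s → Shuffle p q r →
      Shuffle (s ++ p) (s ++ q) (s ++ r)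

/-- Shuffle closure of a set of (positive-ended) paths. -/
inductive ShuffleClosure (P : Set (List Action)) : List Action → Prop where
  | mem {p} : p ∈ P → ShuffleClosure P p
  | shuffle {p q r} : ShuffleClosure P p → ShuffleClosure P q →
      Shuffle p q r → ShuffleClosure P r

/-- Coherence of chronicles: comparability and propagation. -/
def Coherent (c₁ c₂ : List Action) : Prop :=
  (∀ w κ₁ κ₂, w ++ [κ₁] <+: c₁ → w ++ [κ₂] <+: c₂ →
      κ₁ = κ₂ ∨ (κ₁.isPositive = false ∧ κ₂.isPositive = false)) ∧
  (∀ w ξ₁ I₁ w₁ σ₁ ξ₂ I₂ w₂ σ₂,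
      w ++ Action.proper false ξ₁ I₁ :: w₁ ++ [σ₁] <+: c₁ →
      w ++ Action.proper false ξ₂ I₂ :: w₂ ++ [σ₂] <+: c₂ →
      ξ₁ ≠ ξ₂ → ∀ f, σ₁.focus? = some f → σ₂.focus? ≠ some f)

/-- A design, as a prefix-closed clique of chronicles. -/
structure IsDesign (β : Base) (D : Set (List Action)) : Prop where
  chron : ∀ c ∈ D, IsChronicle β c
  prefixClosed : ∀ c ∈ D, ∀ d, d <+: c → d ≠ [] → d ∈ D
  coherent : ∀ c ∈ D, ∀ d ∈ D, Coherent c d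
  maxPos : ∀ c ∈ D, (∀ κ, c ++ [κ] ∉ D) →
    ∃ a, c.getLast? = some a ∧ a.isPositive = true
  posNonempty : β.isPositive → D.Nonempty

/-- A net of designs, abusively seen as its set of chronicles. -/
structure IsNet (β : Base) (R : Set (List Action)) : Prop where
  chron : ∀ c ∈ R, IsChronicle β c
  prefixClosed : ∀ c ∈ R, ∀ d, d <+: c → d ≠ [] → d ∈ R

/-- `p` is a path of the design/net `D`: each view of each non-empty prefix of
`p` is a chronicle of `D`. -/
def PathOf (β : Base) (D : Set (List Action)) (p : List Action) : Prop :=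
  IsPath β p ∧ ∀ q, q <+: p → q ≠ [] → view q ∈ D

/-- Whose turn it is in normalization: `dpos` says whether the design `D` owns
the first (positive) move; afterwards `D` moves exactly after negative actions. -/
def TurnD (dpos : Prop) (s : List Action) : Prop :=
  match s.getLast? with
  | none => dpos
  | some a => a.isPositive = false

/-- Interaction (normalization) between a design `D` and a counter-net `R`,
described by its visited sequence `s` (seen from `D`): it converges from
state `s` if the design to move plays the daimon, or it plays a proper
positive action accepted (in dual form) by the other one, and the interaction
converges from the extended state. -/
inductive Conv (D R : Set (List Action)) (dpos : Prop) : List Action → Prop where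
  | daiD {s} : TurnD dpos s → view (s ++ [Action.daimon]) ∈ D → Conv D R dpos s
  | daiR {s} : ¬ TurnD dpos s →
      view (s.map Action.dual ++ [Action.daimon]) ∈ R → Conv D R dpos s
  | stepD {s κ} : TurnD dpos s → κ.isPositive = true → κ ≠ Action.daimon →
      view (s ++ [κ]) ∈ D → view ((s ++ [κ]).map Action.dual) ∈ R →
      Conv D R dpos (s ++ [κ]) → Conv D R dpos s
  | stepR {s κ} : ¬ TurnD dpos s → κ.isPositive = false →
      view ((s ++ [κ]).map Action.dual) ∈ R → view (s ++ [κ]) ∈ D →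
      Conv D R dpos (s ++ [κ]) → Conv D R dpos s

/-- The simple base `⊢ ξ` (positive) or `ξ ⊢` (negative). -/
def simpleBase (ξ : Address) (pos : Bool) : Base :=
  if pos then [⟨none, {ξ}⟩] else [⟨some ξ, ∅⟩]

/-- The orthogonal of a set of designs on a simple base. -/
def orthSet (ξ : Address) (pos : Bool) (A : Set (Set (List Action))) :
    Set (Set (List Action)) :=
  {E | IsDesign (simpleBase ξ !pos) E ∧
    ∀ D ∈ A, if pos then Conv D E True [] else Conv E D True []}

def biorth (ξ : Address) (pos : Bool) (A : Set (Set (List Action))) :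
    Set (Set (List Action)) :=
  orthSet ξ (!pos) (orthSet ξ pos A)

/-- A behaviour: a bi-orthogonally closed set of designs on a simple base. -/
structure Behaviour (ξ : Address) (pos : Bool) where
  designs : Set (Set (List Action))
  isDesign : ∀ D ∈ designs, IsDesign (simpleBase ξ pos) D
  closed : designs = biorth ξ pos designs

/-- Visitable paths of a set of designs: traces of convergent normalizations
with the orthogonal, characterized as the dual pairs of paths. -/
def VisitableSet (ξ : Address) (pos : Bool) (S : Set (Set (List Action)))
    (p : List Action) : Prop :=
  ∃ D ∈ S, ∃ E ∈ orthSet ξ pos S,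
    PathOf (simpleBase ξ pos) D p ∧ PathOf (simpleBase ξ !pos) E (dualSeq p)

def Visitable {ξ : Address} {pos : Bool} (A : Behaviour ξ pos)
    (p : List Action) : Prop :=
  VisitableSet ξ pos A.designs p

/-- Material (incarnated) design of a behaviour: inclusion-minimal. -/
def Material {ξ : Address} {pos : Bool} (A : Behaviour ξ pos)
    (D : Set (List Action)) : Prop :=
  D ∈ A.designs ∧ ∀ E ∈ A.designs, E ⊆ D → E = D

/-- Completion of a design: add daimon-ended chronicles after every missing
negative action. -/
def completion (β : Base) (D : Set (List Action)) : Set (List Action) :=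
  D ∪ {c' | ∃ c ∈ D, ∃ ξ I,
    (c' = c ++ [Action.proper false ξ I] ∨
      c' = c ++ [Action.proper false ξ I, Action.daimon]) ∧
    IsChronicle β (c ++ [Action.proper false ξ I, Action.daimon]) ∧
    c ++ [Action.proper false ξ I] ∉ D}

def DaiDesign : Set (List Action) := {[Action.daimon]}

def firstAction (D : Set (List Action)) (κ : Action) : Prop :=
  ∃ c ∈ D, c.head? = some κ

/-- Directory of a set of positive designs on `⊢ ξ`. -/
def directory (ξ : Address) (A : Set (Set (List Action))) : Set (Finset ℕ) :=
  {I | ∃ D ∈ A, firstAction D (Action.proper true ξ I)}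

/-- Alien positive behaviours: ramifications of first actions pairwise disjoint. -/
def Alien (ξ : Address) (A B : Behaviour ξ true) : Prop :=
  ∀ I ∈ directory ξ A.designs, ∀ J ∈ directory ξ B.designs, Disjoint I J

/-- Extension of the first action of a design by a set `J`. -/
def extDesign (ξ : Address) (J : Finset ℕ) (D : Set (List Action)) :
    Set (List Action) :=
  {c | ∃ I t, (Action.proper true ξ I :: t) ∈ D ∧
      c = Action.proper true ξ (I ∪ J) :: t}

/-- The extension `A_[B]` of a set of designs along another. -/
def extended (ξ : Address) (A B : Set (Set (List Action))) :
    Set (Set (List Action)) :=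
  insert DaiDesign
    {D' | ∃ D ∈ A, (∃ I, firstAction D (Action.proper true ξ I)) ∧
      ∃ E ∈ B, ∃ J, firstAction E (Action.proper true ξ J) ∧
        D' = extDesign ξ J D}

/-- The extension `P_[Q]` of a set of paths along another. -/
def extPaths (ξ : Address) (P Q : Set (List Action)) : Set (List Action) :=
  insert [Action.daimon]
    {p | ∃ I t, (Action.proper true ξ I :: t) ∈ P ∧
      ∃ q ∈ Q, ∃ J, q.head? = some (Action.proper true ξ J) ∧
        p = Action.proper true ξ (I ∪ J) :: t}

/-- Prefixing a (negative) design by the positive action `(+, ξ, {i})`. -/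
def shiftD (ξ : Address) (i : ℕ) (D : Set (List Action)) : Set (List Action) :=
  insert [Action.proper true ξ {i}]
    {c | ∃ d ∈ D, c = Action.proper true ξ {i} :: d}

/-- `C = ↑N` : the positive shift of the negative behaviour `N`. -/
def IsShiftOf (ξ : Address) (i : ℕ) (C : Behaviour ξ true)
    (N : Behaviour (ξ ++ [i]) false) : Prop :=
  C.designs = biorth ξ true (shiftD ξ i '' N.designs)

/-- `C = ⊕ₖ F k`. -/
def IsSumOf {ξ : Address} {ι : Type} (C : Behaviour ξ true)
    (F : ι → Behaviour ξ true) : Prop :=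
  C.designs = biorth ξ true (⋃ k, (F k).designs)

/-- Pairwise disjoint family of positive behaviours (disjoint directories). -/
def PairwiseDisjointFam {ξ : Address} {ι : Type}
    (F : ι → Behaviour ξ true) : Prop :=
  ∀ k l, k ≠ l → ∀ I ∈ directory ξ (F k).designs,
    I ∉ directory ξ (F l).designs

open Classical in
/-- Tensor of two positive designs on `⊢ ξ`. -/
noncomputable def tensorD (ξ : Address) (D E : Set (List Action)) :
    Set (List Action) :=
  if D = DaiDesign ∨ E = DaiDesign then DaiDesign
  else {c | ∃ I J, firstAction D (Action.proper true ξ I) ∧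
      firstAction E (Action.proper true ξ J) ∧
      ∃ t, ((Action.proper true ξ I :: t) ∈ D ∨
            (Action.proper true ξ J :: t) ∈ E) ∧
        c = Action.proper true ξ (I ∪ J) :: t}

/-- `C = A ⊗ B`. -/
def IsTensorOf {ξ : Address} (C A B : Behaviour ξ true) : Prop :=
  C.designs = biorth ξ true
    {G | ∃ D ∈ A.designs, ∃ E ∈ B.designs, G = tensorD ξ D E}

/-- Hereditary chains of justifiers inside a sequence `p`. -/
inductive JustChain (β : Base) (p : List Action) : List Action → Prop where
  | init {κ} : κ ∈ p → Initial β κ → JustChain β p [κ]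
  | cons {s κ κ'} : JustChain β p (s ++ [κ]) → κ' ∈ p → κ.justifies κ' →
      JustChain β p (s ++ [κ, κ'])

/-- Trivial chronicle for a behaviour: hereditary-justifier sequence of an
action of a chronicle of a material design. -/
def TrivialChronicle {ξ : Address} {pos : Bool} (A : Behaviour ξ pos)
    (s : List Action) : Prop :=
  ∃ D, Material A D ∧ ∃ c ∈ D, JustChain (simpleBase ξ pos) c s

/-- Regular path for a behaviour: reversible path whose justifier chains are
trivial chronicles for the behaviour. -/
def RegularPath {ξ : Address} {pos : Bool} (A : Behaviour ξ pos)
    (p : List Action) : Prop :=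
  IsPath (simpleBase ξ pos) p ∧ IsPath (simpleBase ξ !pos) (dualSeq p) ∧
  ∀ κ ∈ p, κ ≠ Action.daimon →
    ∃ s, JustChain (simpleBase ξ pos) p s ∧ s.getLast? = some κ ∧
      TrivialChronicle A s

/-- Regular behaviour: every regular path is visitable. -/
def Regular {ξ : Address} {pos : Bool} (A : Behaviour ξ pos) : Prop :=
  ∀ p, RegularPath A p → Visitable A p

/-- Proper actions occurring in a design. -/
def properActs (D : Set (List Action)) : Set Action :=
  {a | a ≠ Action.daimon ∧ ∃ c ∈ D, a ∈ c}

/-- Essentially finite behaviour: finitely many material designs, all finite. -/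
def EssFinite {ξ : Address} {pos : Bool} (A : Behaviour ξ pos) : Prop :=
  {D | Material A D}.Finite ∧ ∀ D, Material A D → (properActs D).Finite

/-- A slice of a design. -/
def IsSlice (D S : Set (List Action)) : Prop :=
  S ⊆ D ∧ (∀ c ∈ S, ∀ d, d <+: c → d ≠ [] → d ∈ S) ∧
  ∀ w ξ I₁ I₂, w ++ [Action.proper false ξ I₁] ∈ S →
    w ++ [Action.proper false ξ I₂] ∈ S → I₁ = I₂

/-- Uniformly bounded behaviour: slice sizes of material designs uniformly
bounded. -/
def UnifBounded {ξ : Address} {pos : Bool} (A : Behaviour ξ pos) : Prop :=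
  ∃ N : ℕ, ∀ D, Material A D → ∀ S, IsSlice D S →
    (properActs S).Finite ∧ (properActs S).ncard < N

def oneDesign (ξ : Address) : Set (List Action) :=
  {[Action.proper true ξ ∅]}

mutual
  /-- The class `C∞⁺` of positive behaviours: `0`, `1`, or a (possibly
  infinite) nonempty sum of finite tensors of shifts of `C∞⁻` elements. -/
  inductive CInf : (ξ : Address) → Behaviour ξ true → Prop where
    | zero {ξ} (A : Behaviour ξ true) :
        A.designs = {DaiDesign} → CInf ξ A
    | one {ξ} (A : Behaviour ξ true) :
        A.designs = biorth ξ true {oneDesign ξ} → CInf ξ A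
    | sum {ξ} {ι : Type} (F : ι → Behaviour ξ true) (C : Behaviour ξ true) :
        Nonempty ι → (∀ k, CInfTS ξ (F k)) → PairwiseDisjointFam F →
        IsSumOf C F → CInf ξ C
  /-- Finite tensors of positive shifts of duals of `C∞⁺` elements. -/
  inductive CInfTS : (ξ : Address) → Behaviour ξ true → Prop where
    | shift {ξ} {i : ℕ} (C : Behaviour ξ true) (N : Behaviour (ξ ++ [i]) false)
        (P : Behaviour (ξ ++ [i]) true) :
        CInf (ξ ++ [i]) P → N.designs = orthSet (ξ ++ [i]) true P.designs →
        IsShiftOf ξ i C N → CInfTS ξ C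
    | tensor {ξ} (A B C : Behaviour ξ true) :
        CInfTS ξ A → CInfTS ξ B → Alien ξ A B → IsTensorOf C A B →
        CInfTS ξ C
end

mutual
  /-- The class `C_f⁺`: as `C∞⁺` but with finite sums only. -/
  inductive CFin : (ξ : Address) → Behaviour ξ true → Prop where
    | zero {ξ} (A : Behaviour ξ true) :
        A.designs = {DaiDesign} → CFin ξ A
    | one {ξ} (A : Behaviour ξ true) :
        A.designs = biorth ξ true {oneDesign ξ} → CFin ξ A
    | sum {ξ} {ι : Type} (F : ι → Behaviour ξ true) (C : Behaviour ξ true) :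
        Nonempty ι → Finite ι → (∀ k, CFinTS ξ (F k)) → PairwiseDisjointFam F →
        IsSumOf C F → CFin ξ C
  inductive CFinTS : (ξ : Address) → Behaviour ξ true → Prop where
    | shift {ξ} {i : ℕ} (C : Behaviour ξ true) (N : Behaviour (ξ ++ [i]) false)
        (P : Behaviour (ξ ++ [i]) true) :
        CFin (ξ ++ [i]) P → N.designs = orthSet (ξ ++ [i]) true P.designs →
        IsShiftOf ξ i C N → CFinTS ξ C
    | tensor {ξ} (A B C : Behaviour ξ true) :
        CFinTS ξ A → CFinTS ξ B → Alien ξ A B → IsTensorOf C A B →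
        CFinTS ξ C
end

/-- The class `C∞⁻` : duals of `C∞⁺` elements. -/
def CInfN (ξ : Address) (B : Behaviour ξ false) : Prop :=
  ∃ A : Behaviour ξ true, CInf ξ A ∧ B.designs = orthSet ξ true A.designs

def CFinN (ξ : Address) (B : Behaviour ξ false) : Prop :=
  ∃ A : Behaviour ξ true, CFin ξ A ∧ B.designs = orthSet ξ true A.designs

-- helpers
lemma viewRevAux_succ_eq (n : ℕ) : ∀ l : List Action, l.length ≤ n →
    viewRevAux (n + 1) l = viewRevAux n l := by
  induction n with
  | zero => intro l hl; rw [List.length_eq_zero_iff.mp (Nat.le_zero.mp hl)]; rfl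
  | succ n ih =>
    intro l hl
    match l with
    | [] => rfl
    | a :: w =>
      simp only [List.length_cons, Nat.add_le_add_iff_right] at hl
      by_cases hpos : a.isPositive
      · simp only [viewRevAux, hpos, if_true, ih w hl]
      · simp only [viewRevAux, hpos, Bool.false_eq_true, if_false,
          ih _ (le_trans ((List.dropWhile_sublist _).length_le) hl)]

lemma viewRevAux_eq_viewRev : ∀ (n : ℕ) (l : List Action), l.length ≤ n →
    viewRevAux n l = viewRev l := by
  intro n
  induction n with
  | zero => intro l hl; rw [List.length_eq_zero_iff.mp (Nat.le_zero.mp hl)]; rfl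
  | succ n ih =>
    intro l hl
    rcases Nat.lt_or_ge l.length (n+1) with h | h
    · rw [viewRevAux_succ_eq n l (Nat.lt_succ_iff.mp h), ih l (Nat.lt_succ_iff.mp h)]
    · have : l.length = n + 1 := le_antisymm hl h
      rw [viewRev, this]

lemma viewRev_cons_pos {a : Action} (h : a.isPositive = true) (w : List Action) :
    viewRev (a :: w) = a :: viewRev w := by
  show viewRevAux (w.length + 1) (a :: w) = _
  simp only [viewRevAux, h, if_true]
  rfl

lemma viewRev_cons_neg {a : Action} (h : a.isPositive = false) (w : List Action) :
    viewRev (a :: w) = a :: viewRev (w.dropWhile fun b => !(b.justifiesB a)) := by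
  show viewRevAux (w.length + 1) (a :: w) = _
  simp only [viewRevAux, h, if_false, Bool.false_eq_true]
  rw [viewRevAux_eq_viewRev _ _ ((List.dropWhile_sublist _).length_le)]

lemma view_append_pos {a : Action} (h : a.isPositive = true) (w : List Action) :
    view (w ++ [a]) = view w ++ [a] := by
  rw [view, List.reverse_append, List.reverse_singleton, List.singleton_append,
    viewRev_cons_pos h, List.reverse_cons, view]

lemma view_append_neg {a : Action} (h : a.isPositive = false) (w : List Action) :
    view (w ++ [a]) =
      (viewRev (w.reverse.dropWhile fun b => !(b.justifiesB a))).reverse ++ [a] := by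
  rw [view, List.reverse_append, List.reverse_singleton, List.singleton_append,
    viewRev_cons_neg h, List.reverse_cons]

lemma viewRev_subset : ∀ (n : ℕ) (l : List Action), viewRevAux n l ⊆ l := by
  intro n
  induction n with
  | zero => intro l; simp [viewRevAux]
  | succ n ih =>
    intro l
    match l with
    | [] => simp [viewRevAux]
    | a :: w =>
      by_cases hpos : a.isPositive
      · simp only [viewRevAux, hpos, if_true]
        exact List.cons_subset_cons a (ih w)
      · simp only [viewRevAux, hpos, if_false, Bool.false_eq_true]
        refine List.cons_subset_cons a ?_
        exact fun x hx => (List.dropWhile_sublist _).subset (ih _ hx)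

lemma view_subset (l : List Action) : view l ⊆ l := by
  intro a ha
  rw [view, List.mem_reverse] at ha
  have := viewRev_subset _ _ ha
  rwa [List.mem_reverse] at this


/-- `JQ a b` : if `b` is negative then `a` (its predecessor) justifies it. -/
def JQ (a b : Action) : Prop := b.isPositive = false → a.justifiesB b = true

lemma view_eq_self_of_chain (l : List Action) (h : l.Chain' JQ) : view l = l := by
  induction l using List.reverseRecOn with
  | nil => rfl
  | append_singleton w a ih =>
    have hw : w.Chain' JQ := (List.isChain_append.mp h).1
    by_cases hpos : a.isPositive
    · rw [view_append_pos hpos, ih hw]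
    · rcases List.eq_nil_or_concat w with rfl | ⟨u, c, rfl⟩
      · simp only [List.nil_append]
        rw [show [a] = [] ++ [a] from rfl, view_append_neg (Bool.not_eq_true _ ▸ hpos)]
        simp [viewRev, viewRevAux]
      · simp only [List.concat_eq_append] at *
        have hj : c.justifiesB a = true := by
          have := (List.isChain_append.mp h).2.2 c (by simp) a (by simp)
          exact this (Bool.not_eq_true _ ▸ hpos)
        rw [view_append_neg (Bool.not_eq_true _ ▸ hpos)]
        have hdw : (u ++ [c]).reverse.dropWhile (fun b => !(b.justifiesB a)) =
            (u ++ [c]).reverse := by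
          rw [List.reverse_append, List.reverse_singleton, List.singleton_append,
            List.dropWhile_cons_of_neg (by simp [hj])]
        rw [hdw]
        have h2 := ih hw
        rw [view] at h2
        rw [h2]

lemma chain'_or_split (Q : Action → Action → Prop) :
    ∀ l : List Action, l.Chain' Q ∨
      ∃ u c a v, l = u ++ c :: a :: v ∧ ¬ Q c a ∧ (a :: v).Chain' Q := by
  intro l
  induction l with
  | nil => left; exact List.isChain_nil
  | cons x t ih =>
    rcases ih with hch | ⟨u, c, a, v, rfl, hq, hch⟩
    · match t, hch with
      | [], _ => left; exact List.isChain_nil.cons (by simp)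
      | h :: t', hch =>
        by_cases hxy : Q x h
        · left; exact List.IsChain.cons_cons hxy hch
        · right; exact ⟨[], x, h, t', rfl, hxy, hch⟩
    · right; exact ⟨x :: u, c, a, v, rfl, hq, hch⟩

lemma viewRev_skip {b : Action} (hb : b.isPositive = false) {u₁ u₂ : List Action}
    (hdrop : u₁.dropWhile (fun z => !(z.justifiesB b)) =
      u₂.dropWhile (fun z => !(z.justifiesB b))) :
    ∀ m : List Action, (m ++ [b]).Chain' (flip JQ) →
      viewRev (m ++ b :: u₁) = viewRev (m ++ b :: u₂) := by
  intro m
  induction m with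
  | nil =>
    intro _
    simp only [List.nil_append]
    rw [viewRev_cons_neg hb, viewRev_cons_neg hb, hdrop]
  | cons a m' ih =>
    intro hch
    simp only [List.cons_append] at hch ⊢
    have hch' : (m' ++ [b]).Chain' (flip JQ) := hch.tail
    by_cases hpos : a.isPositive
    · rw [viewRev_cons_pos hpos, viewRev_cons_pos hpos, ih hch']
    · have hneg : a.isPositive = false := Bool.not_eq_true _ ▸ hpos
      rw [viewRev_cons_neg hneg, viewRev_cons_neg hneg]
      cases m' with
      | nil =>
        have hj : b.justifiesB a = true :=
          ((List.isChain_cons.mp hch).1 b (by simp)) hneg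
        simp only [List.nil_append] at ih ⊢
        rw [List.dropWhile_cons_of_neg (by simp [hj]),
          List.dropWhile_cons_of_neg (by simp [hj]), ih hch']
      | cons c m'' =>
        have hj : c.justifiesB a = true :=
          ((List.isChain_cons.mp hch).1 c (by simp)) hneg
        simp only [List.cons_append] at ih ⊢
        rw [List.dropWhile_cons_of_neg (by simp [hj]),
          List.dropWhile_cons_of_neg (by simp [hj]), ih hch']


lemma zipWith_append_nil_right (A : List (List Action)) :
    List.zipWith (· ++ ·) A (A.map fun _ => ([] : List Action)) = A := by
  induction A with
  | nil => rfl
  | cons x A ih => simp only [List.map_cons, List.zipWith_cons_cons, List.append_nil, ih]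

lemma zipWith_nil_left_append (B : List (List Action)) :
    List.zipWith (· ++ ·) (B.map fun _ => ([] : List Action)) B = B := by
  induction B with
  | nil => rfl
  | cons x B ih => simp only [List.map_cons, List.zipWith_cons_cons, List.nil_append, ih]

lemma prefix_append_cases {q s t : List Action} (h : q <+: s ++ t) :
    q <+: s ∨ ∃ r, r <+: t ∧ q = s ++ r := by
  rcases le_or_gt q.length s.length with hl | hl
  · exact Or.inl (List.prefix_of_prefix_length_le h (List.prefix_append s t) hl)
  · right
    have hs : s <+: q :=
      List.prefix_of_prefix_length_le (List.prefix_append s t) h (le_of_lt hl)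
    obtain ⟨r, rfl⟩ := hs
    obtain ⟨k, hk⟩ := h
    exact ⟨r, ⟨k, by rwa [List.append_assoc, List.append_cancel_left_eq] at hk⟩, rfl⟩

lemma head?_of_prefix {q p : List Action} (h : q <+: p) (hq : q ≠ []) :
    p.head? = q.head? := by
  obtain ⟨r, rfl⟩ := h
  cases q with
  | nil => exact absurd rfl hq
  | cons a q' => rfl

lemma IsPath.prefix {β : Base} {p q : List Action} (h : IsPath β p) (hq : q <+: p)
    (hq0 : q ≠ []) : IsPath β q := by
  obtain ⟨r, hr⟩ := hq
  subst hr
  constructor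
  · exact (List.isChain_append.mp h.alternating).1
  · exact fun w a hwa => h.justified w a (hwa.trans (List.prefix_append _ _))
  · exact fun w a b hwa => h.negJump w a b (hwa.trans (List.prefix_append _ _))
  · exact fun w a hwa => h.posJump w a (hwa.trans (List.prefix_append _ _))
  · exact h.linearity.sublist ((List.sublist_append_left q r).filterMap _)
  · intro w hw
    have hp := h.daimonLast w (hw.trans (List.prefix_append _ _))
    exact hw.eq_of_length (by
      have h2 : q.length ≤ (w ++ [Action.daimon]).length := by
        rw [hp]; simp
      have h1 := hw.length_le
      omega)
  · intro hd
    apply h.daimonFirst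
    rw [head?_of_prefix (List.prefix_append q r) hq0, hd]
  · intro hβ
    obtain ⟨a, t, hpt, hcase⟩ := h.totality hβ
    cases q with
    | nil => exact absurd rfl hq0
    | cons a' q' =>
      rw [List.cons_append] at hpt
      exact ⟨a, q', by rw [(List.cons.injEq _ _ _ _).mp hpt |>.1], hcase⟩

lemma PathOf.prefix {β : Base} {R : Set (List Action)} {p q : List Action}
    (h : PathOf β R p) (hq : q <+: p) (hq0 : q ≠ []) : PathOf β R q :=
  ⟨h.1.prefix hq hq0, fun w hw hw0 => h.2 w (hw.trans hq) hw0⟩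

lemma exists_negBlocks : ∀ l : List Action,
    l.Chain' (fun a b => a.isPositive ≠ b.isPositive) →
    (∀ h ∈ l.head?, h.isPositive = false) →
    (∀ z ∈ l.getLast?, z.isPositive = true) →
    ∃ bs : List (List Action), (∀ x ∈ bs, NegBlock x) ∧ bs.flatten = l
  | [] => fun _ _ _ => ⟨[], by simp, rfl⟩
  | [a] => fun _ hh hl => by
      have h1 := hh a rfl
      have h2 := hl a rfl
      rw [h1] at h2; exact absurd h2 (by simp)
  | a :: c :: rest => fun hch hh hl => by
      have ha : a.isPositive = false := hh a rfl
      have hc : c.isPositive = true := by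
        have := (List.isChain_cons_cons.mp hch).1
        rw [ha] at this
        exact eq_true_of_ne_false (fun hf => this hf.symm)
      have hch' : (c :: rest).Chain' (fun a b => a.isPositive ≠ b.isPositive) :=
        (List.isChain_cons_cons.mp hch).2
      obtain ⟨bs, hbs, hflat⟩ := exists_negBlocks rest hch'.tail
        (by
          intro z hz
          have := (List.isChain_cons.mp hch').1 z hz
          rw [hc] at this
          exact eq_false_of_ne_true (fun ht => this ht.symm))
        (by
          intro z hz
          apply hl
          cases rest with
          | nil => exact absurd hz (by simp)
          | cons d rest' => rw [List.getLast?_cons_cons, List.getLast?_cons_cons]; exact hz)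
      refine ⟨[a, c] :: bs, ?_, by simp [hflat]⟩
      intro x hx
      rcases List.mem_cons.mp hx with rfl | hx
      · exact ⟨by simp, fun z hz => by simp at hz; exact hz ▸ ha,
          fun z hz => by simp at hz; exact hz ▸ hc⟩
      · exact hbs x hx

lemma flatten_map_nil (B : List (List Action)) :
    (B.map fun _ => ([] : List Action)).flatten = [] := by
  induction B with
  | nil => rfl
  | cons x B ih => simp [ih]

lemma shuffleNeg_of_blocks {u t : List Action}
    (hu : ∃ A : List (List Action), (∀ x ∈ A, NegBlock x) ∧ A.flatten = u)
    (ht : ∃ B : List (List Action), (∀ x ∈ B, NegBlock x) ∧ B.flatten = t)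
    (htne : t ≠ []) :
    ShuffleNeg u t (u ++ t) := by
  obtain ⟨A, hA, rfl⟩ := hu
  obtain ⟨B, hB, rfl⟩ := ht
  have hBne : B ≠ [] := by rintro rfl; exact htne rfl
  refine ⟨A ++ B.map (fun _ => []), A.map (fun _ => []) ++ B, by simp, ?_, ?_, ?_, ?_, ?_, ?_⟩
  · intro x hx
    rcases List.mem_append.mp hx with hx | hx
    · exact Or.inr (hA x hx)
    · obtain ⟨y, _, rfl⟩ := List.mem_map.mp hx
      exact Or.inl rfl
  · intro x hx
    rcases List.mem_append.mp hx with hx | hx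
    · obtain ⟨y, _, rfl⟩ := List.mem_map.mp hx
      exact Or.inl rfl
    · exact Or.inr (hB x hx)
  · rw [List.flatten_append, flatten_map_nil, List.append_nil]
  · rw [List.flatten_append, flatten_map_nil, List.nil_append]
  · rw [List.zipWith_append (by simp), List.flatten_append,
      zipWith_append_nil_right, zipWith_nil_left_append]
  · intro hd
    exfalso
    have : (A ++ B.map (fun _ => ([] : List Action))).getLast? = some [] := by
      rw [List.getLast?_append]
      have : (B.map (fun _ => ([] : List Action))).getLast? = some [] := by
        rw [List.getLast?_map]
        obtain ⟨b0, hb0⟩ := List.getLast?_isSome.mpr hBne |> Option.isSome_iff_exists.mp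
        rw [hb0]; rfl
      rw [this]; rfl
    rw [EndsWithDaimon, this] at hd
    simp at hd


lemma extract_path {β : Base} {R : Set (List Action)} (hR : IsNet β R)
    {w s α v : List Action} {b : Action}
    (hp : PathOf β R (w ++ b :: v))
    (hpe : PosEnded (w ++ b :: v))
    (hw : w ≠ [])
    (hb : b.isPositive = false)
    (hws : w = s ++ α)
    (hdrop : s.reverse.dropWhile (fun z => !(z.justifiesB b)) =
      w.reverse.dropWhile (fun z => !(z.justifiesB b)))
    (hchain : (b :: v).Chain' JQ)
    (hjunction : s = [] ∨
      ∃ s' y, s = s' ++ [y] ∧ y.isPositive = true ∧ y.justifiesB b = true) :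
    PathOf β R (s ++ b :: v) ∧ PosEnded (s ++ b :: v) := by
  have P := hp.1
  have hbd : b ≠ Action.daimon := by
    intro h; subst h; simp [Action.isPositive] at hb
  have hvne : v ≠ [] := by
    rintro rfl
    rcases hpe with h | ⟨a, hlast, hapos⟩
    · exact (by simp : w ++ [b] ≠ []) h
    · rw [List.getLast?_concat] at hlast
      rw [(Option.some_injective _ hlast : b = a)] at hb
      rw [hapos] at hb; exact Bool.false_ne_true hb.symm
  have hsw : s <+: w := hws ▸ List.prefix_append s α
  have hswsub : s ⊆ w := hsw.subset
  have hwp : w <+: w ++ b :: v := List.prefix_append _ _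
  have hpref_p : ∀ {m : List Action}, m <+: v → w ++ b :: m <+: w ++ b :: v := by
    intro m hm
    obtain ⟨r, rfl⟩ := hm
    exact ⟨r, by simp⟩
  -- transfer of views
  have hview : ∀ m, m <+: v → view (s ++ b :: m) = view (w ++ b :: m) := by
    intro m hm
    have hch : (m.reverse ++ [b]).Chain' (flip JQ) := by
      have h1 : (b :: m).Chain' JQ := by
        obtain ⟨r, hr⟩ := hm
        rw [← hr, ← List.cons_append] at hchain
        exact (List.isChain_append.mp hchain).1
      have h2 : m.reverse ++ [b] = (b :: m).reverse := by simp
      rw [h2]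
      exact (List.isChain_reverse).mpr h1
    have e1 : (s ++ b :: m).reverse = m.reverse ++ b :: s.reverse := by simp
    have e2 : (w ++ b :: m).reverse = m.reverse ++ b :: w.reverse := by simp
    rw [view, view, e1, e2, viewRev_skip hb hdrop m.reverse hch]
  -- prefix case analysis
  have hcases : ∀ {q : List Action}, q <+: s ++ b :: v →
      q <+: s ∨ ∃ m, m <+: v ∧ q = s ++ b :: m := by
    intro q hq
    rcases prefix_append_cases hq with h | ⟨r, hr, rfl⟩
    · exact Or.inl h
    · cases r with
      | nil => exact Or.inl (by simp)
      | cons b' r' =>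
        obtain ⟨rfl, hr'⟩ := List.cons_prefix_cons.mp hr
        exact Or.inr ⟨r', hr', rfl⟩
  -- views of prefixes are in R
  have hprefR : ∀ q, q <+: s ++ b :: v → q ≠ [] → view q ∈ R := by
    intro q hq hq0
    rcases hcases hq with h | ⟨m, hm, rfl⟩
    · exact hp.2 q ((h.trans hsw).trans hwp) hq0
    · rw [hview m hm]
      exact hp.2 _ (hpref_p hm) (by simp)
  -- b's justification in the s = [] case
  have hInitb : s = [] → Initial β b := by
    intro hs0
    rw [hs0] at hdrop
    simp only [List.reverse_nil, List.dropWhile_nil] at hdrop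
    have hnoj : ∀ z ∈ w, ¬ z.justifies b := by
      intro z hz hj
      have := List.dropWhile_eq_nil_iff.mp hdrop.symm z (by simpa using hz)
      rw [hj] at this; simp at this
    rcases P.justified w b ⟨v, by simp⟩ hbd with h | ⟨z, hz, hj⟩
    · exact h
    · exact absurd hj (hnoj z hz)
  have hβneg : s = [] → ¬ β.isPositive := by
    intro hs0 hβ
    have hvb : view (w ++ [b]) = [b] := by
      rw [view_append_neg hb]
      rw [hs0] at hdrop
      simp only [List.reverse_nil, List.dropWhile_nil] at hdrop
      rw [← hdrop]
      rfl
    have hmem : view (w ++ [b]) ∈ R := hp.2 _ ⟨v, by simp⟩ (by simp)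
    rw [hvb] at hmem
    obtain ⟨a', t', h1, h2⟩ := (hR.chron _ hmem).1.totality hβ
    obtain ⟨rfl, rfl⟩ := (List.cons.injEq _ _ _ _).mp h1.symm
    rcases h2 with h2 | ⟨h2, _⟩
    · exact hbd h2
    · rw [hb] at h2; exact Bool.false_ne_true h2
  refine ⟨⟨⟨?_, ?_, ?_, ?_, ?_, ?_, ?_, ?_⟩, ?_⟩, ?_⟩
  -- alternating
  · have hPalt := P.alternating
    rw [hws, List.append_assoc] at hPalt
    refine List.isChain_append.mpr ⟨(List.isChain_append.mp hPalt).1,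
      (List.isChain_append.mp (hws ▸ P.alternating : _)).2.1, ?_⟩
    · intro x hx y' hy'
      simp only [List.head?_cons, Option.mem_some_iff] at hy'
      subst hy'
      rcases hjunction with rfl | ⟨s', y, rfl, hypos, _⟩
      · simp at hx
      · rw [List.getLast?_concat] at hx
        simp only [Option.mem_some_iff] at hx
        subst hx
        rw [hypos, hb]; simp
  -- justified
  · intro w' a hq hnd
    rcases hcases hq with h | ⟨m, hm, heq⟩
    · exact P.justified w' a ((h.trans hsw).trans hwp) hnd
    · rcases List.eq_nil_or_concat m with rfl | ⟨m₀, z, rfl⟩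
      · have h1 : w' = s ∧ a = b := by
          have := heq
          rw [show s ++ [b] = s ++ [b] from rfl] at this
          have h2 := List.append_inj' this (by simp)
          exact ⟨h2.1, by simpa using h2.2⟩
        obtain ⟨rfl, rfl⟩ := h1
        rcases hjunction with rfl | ⟨s', y, rfl, _, hyj⟩
        · exact Or.inl (hInitb rfl)
        · exact Or.inr ⟨y, by simp, hyj⟩
      · simp only [List.concat_eq_append] at hm heq
        have h1 : w' = s ++ b :: m₀ ∧ a = z := by
          rw [show s ++ b :: (m₀ ++ [z]) = (s ++ b :: m₀) ++ [z] by simp] at heq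
          have h2 := List.append_inj' heq (by simp)
          exact ⟨h2.1, by simpa using h2.2⟩
        obtain ⟨rfl, rfl⟩ := h1
        have hm₀ : m₀ <+: v := (List.prefix_append m₀ [a]).trans hm
        have hqp : (w ++ b :: m₀) ++ [a] <+: w ++ b :: v := by
          rw [show (w ++ b :: m₀) ++ [a] = w ++ b :: (m₀ ++ [a]) by simp]
          exact hpref_p hm
        rcases P.justified (w ++ b :: m₀) a hqp hnd with h | ⟨j, hj, hjust⟩
        · exact Or.inl h
        · by_cases hap : a.isPositive
          · have hjv := P.negJump (w ++ b :: m₀) a j hqp hap hj hjust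
            rw [← hview m₀ hm₀] at hjv
            exact Or.inr ⟨j, view_subset _ hjv, hjust⟩
          · have hch : ((b :: m₀) ++ [a]).Chain' JQ := by
              obtain ⟨r, hr⟩ := hm
              rw [← hr] at hchain
              rw [show b :: (m₀ ++ [a] ++ r) = (b :: m₀ ++ [a]) ++ r by simp] at hchain
              exact (List.isChain_append.mp hchain).1
            obtain ⟨g, hg⟩ := Option.isSome_iff_exists.mp
              (List.getLast?_isSome.mpr (by simp : (b :: m₀) ≠ []))
            have hrel := (List.isChain_append.mp hch).2.2 g hg a rfl
            have hga : g.justifies a := hrel (Bool.not_eq_true _ ▸ hap)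
            exact Or.inr ⟨g, List.mem_append_right _ (List.mem_of_getLast? hg), hga⟩
  -- negJump
  · intro w' a j hq hap hj hjust
    rcases hcases hq with h | ⟨m, hm, heq⟩
    · exact P.negJump w' a j ((h.trans hsw).trans hwp) hap hj hjust
    · rcases List.eq_nil_or_concat m with rfl | ⟨m₀, z, rfl⟩
      · have h1 : a = b := by
          have h2 := List.append_inj' heq (by simp)
          simpa using h2.2
        rw [h1, hb] at hap; exact absurd hap (by simp)
      · simp only [List.concat_eq_append] at hm heq
        have h1 : w' = s ++ b :: m₀ ∧ a = z := by
          rw [show s ++ b :: (m₀ ++ [z]) = (s ++ b :: m₀) ++ [z] by simp] at heq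
          have h2 := List.append_inj' heq (by simp)
          exact ⟨h2.1, by simpa using h2.2⟩
        obtain ⟨rfl, rfl⟩ := h1
        have hm₀ : m₀ <+: v := (List.prefix_append m₀ [a]).trans hm
        have hqp : (w ++ b :: m₀) ++ [a] <+: w ++ b :: v := by
          rw [show (w ++ b :: m₀) ++ [a] = w ++ b :: (m₀ ++ [a]) by simp]
          exact hpref_p hm
        have hjw : j ∈ w ++ b :: m₀ := by
          rcases List.mem_append.mp hj with h | h
          · exact List.mem_append_left _ (hswsub h)
          · exact List.mem_append_right _ h
        have := P.negJump (w ++ b :: m₀) a j hqp hap hjw hjust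
        rwa [← hview m₀ hm₀] at this
  -- posJump
  · intro w' a hq hap hnd σ hσ hf
    rcases hcases hq with h | ⟨m, hm, heq⟩
    · exact P.posJump w' a ((h.trans hsw).trans hwp) hap hnd σ hσ hf
    · rcases List.eq_nil_or_concat m with rfl | ⟨m₀, z, rfl⟩
      · have h1 : a = b := by
          have h2 := List.append_inj' heq (by simp)
          simpa using h2.2
        rw [h1, hb] at hap; exact absurd hap (by simp)
      · simp only [List.concat_eq_append] at hm heq
        have h1 : w' = s ++ b :: m₀ ∧ a = z := by
          rw [show s ++ b :: (m₀ ++ [z]) = (s ++ b :: m₀) ++ [z] by simp] at heq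
          have h2 := List.append_inj' heq (by simp)
          exact ⟨h2.1, by simpa using h2.2⟩
        obtain ⟨rfl, rfl⟩ := h1
        have hqp : (w ++ b :: m₀) ++ [a] <+: w ++ b :: v := by
          rw [show (w ++ b :: m₀) ++ [a] = w ++ b :: (m₀ ++ [a]) by simp]
          exact hpref_p hm
        rcases P.posJump (w ++ b :: m₀) a hqp hap hnd σ hσ hf with ⟨habs, _⟩ | ⟨w₀, b', hw0, hb'neg, howns⟩
        · exact absurd habs (by simp)
        · rcases List.eq_nil_or_concat m₀ with rfl | ⟨m₁, g, rfl⟩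
          · have hb'b : b' = b := by
              have h5 := congrArg List.getLast? hw0
              rw [show w ++ [b] = w ++ [b] from rfl, List.getLast?_concat,
                List.getLast?_concat] at h5
              exact (Option.some_injective _ h5).symm
            exact Or.inr ⟨s, b, by simp, hb'b ▸ hb'neg, hb'b ▸ howns⟩
          · simp only [List.concat_eq_append] at hw0
            have hb'g : b' = g := by
              have h5 := congrArg List.getLast? hw0
              rw [show w ++ b :: (m₁ ++ [g]) = (w ++ b :: m₁) ++ [g] by simp,
                List.getLast?_concat, List.getLast?_concat] at h5
              exact (Option.some_injective _ h5).symm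
            exact Or.inr ⟨s ++ b :: m₁, g, by simp, hb'g ▸ hb'neg, hb'g ▸ howns⟩
  -- linearity
  · have hsub : List.Sublist (s ++ b :: v) (w ++ b :: v) := by
      rw [hws, List.append_assoc]
      exact (List.Sublist.refl s).append (List.sublist_append_right α (b :: v))
    exact P.linearity.sublist (hsub.filterMap _)
  -- daimonLast
  · intro w' hw'
    rcases hcases hw' with h | ⟨m, hm, heq⟩
    · exfalso
      have h1 := P.daimonLast w' ((h.trans hsw).trans hwp)
      have h2 := congrArg List.length h1
      have h3 := h.length_le
      have h4 := hsw.length_le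
      simp only [List.length_append, List.length_cons] at h2 h3 h4 ⊢
      omega
    · rcases List.eq_nil_or_concat m with rfl | ⟨m₀, z, rfl⟩
      · exfalso
        have h2 := List.append_inj' heq (by simp)
        have : Action.daimon = b := by simpa using h2.2
        exact hbd this.symm
      · simp only [List.concat_eq_append] at hm heq
        have h1 : w' = s ++ b :: m₀ ∧ Action.daimon = z := by
          rw [show s ++ b :: (m₀ ++ [z]) = (s ++ b :: m₀) ++ [z] by simp] at heq
          have h2 := List.append_inj' heq (by simp)
          exact ⟨h2.1, by simpa using h2.2⟩
        obtain ⟨rfl, hz⟩ := h1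
        subst hz
        have hqp : (w ++ b :: m₀) ++ [Action.daimon] <+: w ++ b :: v := by
          rw [show (w ++ b :: m₀) ++ [Action.daimon] = w ++ b :: (m₀ ++ [Action.daimon]) by simp]
          exact hpref_p hm
        have h2 := P.daimonLast _ hqp
        rw [show (w ++ b :: m₀) ++ [Action.daimon] = w ++ b :: (m₀ ++ [Action.daimon]) by simp]
          at h2
        have h3 : m₀ ++ [Action.daimon] = v := by
          have := List.append_cancel_left h2
          simpa using this
        rw [← h3]
        simp
  -- daimonFirst
  · intro hd
    cases s with
    | nil =>
      simp only [List.nil_append, List.head?_cons, Option.some_inj] at hd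
      exact (hbd hd).elim
    | cons a₀ s' =>
      apply P.daimonFirst
      rw [hws]
      simpa using hd
  -- totality
  · intro hβ
    cases s with
    | nil => exact absurd hβ (hβneg rfl)
    | cons a₀ s' =>
      obtain ⟨a, t, hpt, hcase⟩ := P.totality hβ
      rw [hws] at hpt
      simp only [List.cons_append, List.cons.injEq] at hpt
      exact ⟨a₀, s' ++ b :: v, rfl, hpt.1 ▸ hcase⟩
  -- views in R
  · exact hprefR
  -- positive-ended
  · right
    rcases hpe with h | ⟨a, hlast, hapos⟩
    · exact absurd h (by simp)
    · refine ⟨a, ?_, hapos⟩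
      have hsome : ((b :: v).getLast?).isSome := List.getLast?_isSome.mpr (by simp)
      rw [List.getLast?_append, Option.or_of_isSome hsome] at hlast ⊢
      exact hlast

/-- every non-empty positive-ended path of a net `R` belongs to
the shuffle closure of (the chronicles of) `R`. -/
theorem path_mem_shuffleClosure (β : Base) (R : Set (List Action))
    (hR : IsNet β R) (p : List Action)
    (hne : p ≠ []) (hpe : PosEnded p)
    (hp : PathOf β R p) :
    ShuffleClosure R p := by
  suffices H : ∀ n q, q.length ≤ n → q ≠ [] → PosEnded q → PathOf β R q →
      ShuffleClosure R q from H p.length p le_rfl hne hpe hp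
  clear hne hpe hp p
  intro n
  induction n with
  | zero =>
    intro q hl h0 _ _
    exact absurd (List.length_eq_zero_iff.mp (Nat.le_zero.mp hl)) h0
  | succ n ih =>
    intro p hl h0 hpe hp
    rcases chain'_or_split JQ p with hch | ⟨u, c, b, v, rfl, hqf, hchain⟩
    · exact ShuffleClosure.mem
        ((view_eq_self_of_chain p hch) ▸ hp.2 p (List.prefix_refl p) h0)
    · unfold JQ at hqf
      have hfail := _root_.not_imp.mp hqf
      have hb : b.isPositive = false := hfail.1
      have hcnj : ¬ c.justifiesB b = true := hfail.2
      have hbd : b ≠ Action.daimon := by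
        intro h; subst h; simp [Action.isPositive] at hb
      have hpw : u ++ c :: b :: v = (u ++ [c]) ++ b :: v := by simp
      rw [hpw] at hp hpe hl h0 ⊢
      set w : List Action := u ++ [c] with hwdef
      have hwne : w ≠ [] := by simp [hwdef]
      have hwlast : w.getLast? = some c := List.getLast?_concat
      have halt := hp.1.alternating
      have haltw : w.Chain' (fun a b => a.isPositive ≠ b.isPositive) :=
        (List.isChain_append.mp halt).1
      have haltbv : (b :: v).Chain' (fun a b => a.isPositive ≠ b.isPositive) :=
        (List.isChain_append.mp halt).2.1
      have hc : c.isPositive = true := by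
        have h1 := (List.isChain_append.mp halt).2.2 c (by rw [hwlast]; rfl) b rfl
        rw [hb] at h1
        exact eq_true_of_ne_false (fun hf => h1 (hf.trans rfl))
      have hvne : v ≠ [] := by
        rintro rfl
        rcases hpe with h | ⟨a, hlast, hapos⟩
        · simpa using h
        · rw [List.getLast?_concat] at hlast
          rw [(Option.some_injective _ hlast : b = a)] at hb
          rw [hapos] at hb; exact Bool.false_ne_true hb.symm
      have hlastbv : ∀ z ∈ (b :: v).getLast?, z.isPositive = true := by
        intro z hz
        rcases hpe with h | ⟨a, hlast, hapos⟩
        · exact absurd h (by simp)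
        · have hsome : ((b :: v).getLast?).isSome := List.getLast?_isSome.mpr (by simp)
          rw [List.getLast?_append, Option.or_of_isSome hsome] at hlast
          rw [hlast] at hz
          simp only [Option.mem_some_iff] at hz
          exact hz ▸ hapos
      have hblocksbv : ∃ B : List (List Action), (∀ x ∈ B, NegBlock x) ∧
          B.flatten = b :: v :=
        exists_negBlocks _ haltbv (by intro z hz; simp at hz; exact hz ▸ hb) hlastbv
      have hlenw : w.length ≤ n := by
        have := hl
        simp only [List.length_append, List.length_cons] at this
        omega
      have hpew : PosEnded w := Or.inr ⟨c, hwlast, hc⟩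
      have hpathw : PathOf β R w := hp.prefix (List.prefix_append _ _) hwne
      have hclw : ShuffleClosure R w := ih w hlenw hwne hpew hpathw
      -- the landing of the view jump at b
      rcases hland : w.reverse.dropWhile (fun z => !(z.justifiesB b)) with _ | ⟨y, l₂⟩
      · -- nothing in w justifies b : p₂ = b :: v
        have hext := extract_path (s := []) (α := w) hR hp hpe hwne hb (by simp)
          (by rw [hland]; rfl) hchain (Or.inl rfl)
        have hβn : ¬ β.isPositive := by
          intro hβ
          have hvb : view (w ++ [b]) = [b] := by
            rw [view_append_neg hb, hland]
            rfl
          have hmem : view (w ++ [b]) ∈ R := hp.2 _ ⟨v, by simp⟩ (by simp)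
          rw [hvb] at hmem
          obtain ⟨a', t', h1, h2⟩ := (hR.chron _ hmem).1.totality hβ
          obtain ⟨rfl, rfl⟩ := (List.cons.injEq _ _ _ _).mp h1.symm
          rcases h2 with h2 | ⟨h2, _⟩
          · exact hbd h2
          · rw [hb] at h2; exact Bool.false_ne_true h2
        -- the first action of p is negative
        obtain ⟨a₀, w', hww⟩ : ∃ a₀ w', w = a₀ :: w' := by
          cases hw : w with
          | nil => exact absurd hw hwne
          | cons a₀ w' => exact ⟨a₀, w', rfl⟩
        have ha₀ : a₀.isPositive = false := by
          have hpref : [a₀] <+: w ++ b :: v := by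
            rw [hww]; exact ⟨w' ++ b :: v, by simp⟩
          have hnd : a₀ ≠ Action.daimon := by
            rintro rfl
            have := hp.1.daimonLast [] (by simpa using hpref)
            rw [hww] at this
            simp only [List.nil_append] at this
            have := congrArg List.length this
            simp at this
          by_contra hpos
          rw [Bool.not_eq_false] at hpos
          rcases hp.1.justified [] a₀ (by simpa using hpref) hnd with hInit | ⟨j, hj, _⟩
          · obtain ⟨pol, ξ, I, heqa, σ, hσ, hdisj⟩ := hInit
            have hpol : pol = true := by
              rw [heqa] at hpos
              exact hpos
            rcases hdisj with ⟨_, hξ⟩ | ⟨hpf, _⟩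
            · rcases hp.1.posJump [] a₀ (by simpa using hpref) hpos hnd σ hσ
                ⟨ξ, by rw [heqa]; rfl, hξ⟩ with ⟨_, hnone⟩ | ⟨w₀, b'', habs, _⟩
              · exact hβn ⟨σ, hσ, hnone⟩
              · exact absurd habs (by simp)
            · rw [hpol] at hpf; exact absurd hpf (by simp)
          · exact absurd hj List.not_mem_nil
        have hwhead : ∀ z ∈ w.head?, z.isPositive = false := by
          intro z hz
          rw [hww] at hz
          simp only [List.head?_cons, Option.mem_some_iff] at hz
          exact hz ▸ ha₀
        have hwlastpos : ∀ z ∈ w.getLast?, z.isPositive = true := by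
          intro z hz
          rw [hwlast] at hz
          simp only [Option.mem_some_iff] at hz
          exact hz ▸ hc
        have hblocksw : ∃ A : List (List Action), (∀ x ∈ A, NegBlock x) ∧
            A.flatten = w :=
          exists_negBlocks _ haltw hwhead hwlastpos
        have hsn : ShuffleNeg w (b :: v) (w ++ b :: v) :=
          shuffleNeg_of_blocks hblocksw hblocksbv (by simp)
        have hlenbv : (b :: v).length ≤ n := by
          have := hl
          have hwl : 1 ≤ w.length := by
            rw [hww]; simp
          simp only [List.length_append, List.length_cons] at this ⊢
          omega
        obtain ⟨hp₂, hpe₂⟩ := hext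
        simp only [List.nil_append] at hp₂ hpe₂
        exact ShuffleClosure.shuffle hclw
          (ih (b :: v) hlenbv (by simp) hpe₂ hp₂) (Shuffle.base hsn)
      · -- the jump lands on y
        set Pb : Action → Bool := fun z => !(z.justifiesB b) with hPb
        have hyj : y.justifiesB b = true := by
          have h1 := List.head?_dropWhile_not Pb w.reverse
          rw [hland] at h1
          simp only [List.head?_cons] at h1
          simpa [hPb] using h1
        have hsplit : w.reverse = w.reverse.takeWhile Pb ++ (y :: l₂) := by
          rw [← hland, List.takeWhile_append_dropWhile]
        set l₁ : List Action := w.reverse.takeWhile Pb with hl₁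
        have hl₁ne : l₁ ≠ [] := by
          intro h00
          rw [h00, List.nil_append] at hsplit
          have : w.reverse.head? = some y := by rw [hsplit]; rfl
          rw [List.head?_reverse, hwlast] at this
          exact hcnj ((Option.some_injective _ this) ▸ hyj)
        set s : List Action := l₂.reverse ++ [y] with hs
        have hsrev : s.reverse = y :: l₂ := by simp [hs]
        have hws : w = s ++ l₁.reverse := by
          have := congrArg List.reverse hsplit
          rw [List.reverse_reverse, List.reverse_append] at this
          rw [this, hs]
          simp
        have hdrop : s.reverse.dropWhile (fun z => !(z.justifiesB b)) =
            w.reverse.dropWhile (fun z => !(z.justifiesB b)) := by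
          rw [hsrev, hland, List.dropWhile_cons_of_neg (by simp [hyj])]
        -- y is positive, since the view of w ++ [b] is a chronicle
        have hypos : y.isPositive = true := by
          obtain ⟨X, hX⟩ : ∃ X, viewRev (y :: l₂) = y :: X := by
            by_cases hyp : y.isPositive
            · exact ⟨_, viewRev_cons_pos hyp _⟩
            · exact ⟨_, viewRev_cons_neg (Bool.not_eq_true _ ▸ hyp) _⟩
          have hvw : view (w ++ [b]) = (X.reverse ++ [y]) ++ [b] := by
            rw [view_append_neg hb, hland, hX]
            simp
          have hmem : view (w ++ [b]) ∈ R := hp.2 _ ⟨v, by simp⟩ (by simp)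
          rw [hvw] at hmem
          have halt' := (hR.chron _ hmem).1.alternating
          have h2 := (List.isChain_append.mp halt').2.2 y (List.getLast?_concat) b rfl
          rw [hb] at h2
          exact eq_true_of_ne_false (fun hf => h2 (hf.trans rfl))
        have hext := extract_path (s := s) (α := l₁.reverse) hR hp hpe hwne hb hws
          hdrop hchain (Or.inr ⟨l₂.reverse, y, rfl, hypos, hyj⟩)
        obtain ⟨hp₂, hpe₂⟩ := hext
        -- blocks for α := l₁.reverse
        have haltα : (l₁.reverse).Chain' (fun a b => a.isPositive ≠ b.isPositive) := by
          have := haltw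
          rw [hws] at this
          exact (List.isChain_append.mp this).2.1
        have hα_last : (l₁.reverse).getLast? = some c := by
          have h1 : w.getLast? = (l₁.reverse).getLast?.or s.getLast? := by
            rw [hws, List.getLast?_append]
          have hsome : ((l₁.reverse).getLast?).isSome :=
            List.getLast?_isSome.mpr (by simpa using hl₁ne)
          rw [Option.or_of_isSome hsome] at h1
          rw [← h1, hwlast]
        have hα_head : ∀ z ∈ (l₁.reverse).head?, z.isPositive = false := by
          intro z hz
          have := haltw
          rw [hws] at this
          have h2 := (List.isChain_append.mp this).2.2 y
            (by rw [hs, List.getLast?_concat]; rfl) z hz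
          rw [hypos] at h2
          exact eq_false_of_ne_true (fun hf => h2 (rfl.trans hf.symm))
        have hα_lastpos : ∀ z ∈ (l₁.reverse).getLast?, z.isPositive = true := by
          intro z hz
          rw [hα_last] at hz
          simp only [Option.mem_some_iff] at hz
          exact hz ▸ hc
        have hblocksα : ∃ A : List (List Action), (∀ x ∈ A, NegBlock x) ∧
            A.flatten = l₁.reverse :=
          exists_negBlocks _ haltα hα_head hα_lastpos
        have hsn : ShuffleNeg l₁.reverse (b :: v) (l₁.reverse ++ b :: v) :=
          shuffleNeg_of_blocks hblocksα hblocksbv (by simp)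
        have hshuf : Shuffle w (s ++ b :: v) (w ++ b :: v) := by
          have h1 := Shuffle.pre (s := s) (by simp [hs]) (Or.inr ⟨y, List.getLast?_concat, hypos⟩)
            (Shuffle.base hsn)
          rw [← hws] at h1
          rw [show s ++ (l₁.reverse ++ b :: v) = (s ++ l₁.reverse) ++ b :: v by simp,
            ← hws] at h1
          exact h1
        have hlen₂ : (s ++ b :: v).length ≤ n := by
          have := hl
          have hwl : w.length = s.length + l₁.length := by
            rw [hws]; simp
          have hl₁len : 1 ≤ l₁.length := by
            cases hcl : l₁ with
            | nil => exact absurd hcl hl₁ne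
            | cons x xs => simp
          simp only [List.length_append, List.length_cons] at this ⊢
          omega
        exact ShuffleClosure.shuffle hclw
          (ih (s ++ b :: v) hlen₂ (by simp) hpe₂ hp₂) hshuf

end Ludics
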